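/- Let A be an n×n real matrix, B an m×m real matrix, y ∈ ℝᵐ, and μ ∈ ℝ. If B y = μ y and the entries of y sum to zero (1ₘᵀ y = 0), then (A ⋄ B)(1ₙ ⊗ y) = n μ (1ₙ ⊗ y), where 1ₖ denotes the all-ones vector of length k. -/
import Mathlib


open Matrix Kronecker

/-- The `k × k` all-ones matrix `J_k`. -/
def onesMat (k : ℕ) : Matrix (Fin k) (Fin k) ℝ := Matrix.of fun _ _ => 1

/-- The additive Kronecker analogue `A ⋄ B = A ⊗ J_m + J_n ⊗ B`. -/
def diamond {n m : ℕ} (A : Matrix (Fin n) (Fin n) ℝ) (B : Matrix (Fin m) (Fin m) ℝ) :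
    Matrix (Fin n × Fin m) (Fin n × Fin m) ℝ :=
  A ⊗ₖ onesMat m + onesMat n ⊗ₖ B

/-- The Kronecker product of two vectors. -/
def vecKron {n m : ℕ} (x : Fin n → ℝ) (y : Fin m → ℝ) : Fin n × Fin m → ℝ :=
  fun p => x p.1 * y p.2

/-- The all-ones vector `1_k`. -/
def onesVec (k : ℕ) : Fin k → ℝ := fun _ => 1

/-- If `B y = μ y` and the entries of `y` sum to zero, then
`(A ⋄ B)(1_n ⊗ y) = n μ (1_n ⊗ y)`. -/
theorem diamond_mulVec_onesVec_vecKron {n m : ℕ}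
    (A : Matrix (Fin n) (Fin n) ℝ) (B : Matrix (Fin m) (Fin m) ℝ)
    (y : Fin m → ℝ) (mu : ℝ)
    (hBy : B.mulVec y = mu • y) (hy : ∑ j, y j = 0) :
    (diamond A B).mulVec (vecKron (onesVec n) y) =
      ((n : ℝ) * mu) • vecKron (onesVec n) y := by
  funext p
  obtain ⟨i, j⟩ := p
  have hBj : ∑ l, B j l * y l = mu * y j := by
    have := congrFun hBy j
    simpa [Matrix.mulVec, dotProduct] using this
  simp only [diamond, Matrix.mulVec, dotProduct, Matrix.add_apply,
    kroneckerMap_apply, onesMat, vecKron, onesVec, Matrix.of_apply, Pi.smul_apply,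
    smul_eq_mul, Fintype.sum_prod_type, one_mul, mul_one, add_mul]
  rw [Finset.sum_congr rfl fun k _ => Finset.sum_add_distrib]
  rw [Finset.sum_add_distrib]
  have h1 : ∑ k : Fin n, ∑ l, A i k * y l = 0 := by
    simp [← Finset.mul_sum, hy]
  have h2 : ∑ k : Fin n, ∑ l, B j l * y l = (n : ℝ) * (mu * y j) := by
    simp [hBj]
  rw [h1, h2]; ring
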